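/- As θ → 0⁺ with s = sin(θ/2), the function I₃(θ) = (α₁+α₄)²/(α₁α₄), where α₁ = cos θ/(cos θ−1) and α₄ = 1/sin θ, has the asymptotic expansion I₃ = −1/s + 2 + (3/2)s − (27/8)s³ + O(s⁵). -/

import Mathlib

open Real

set_option maxHeartbeats 1000000 in
/-- asymptotic expansion of `I₃(θ) = (α₁+α₄)²/(α₁α₄)` as
`θ → 0⁺`, with `s = sin(θ/2)`: `I₃ = −1/s + 2 + (3/2)s − (27/8)s³ + O(s⁵)`. -/
theorem I3_asymptotic :
    ∃ C > (0 : ℝ), ∃ δ > (0 : ℝ), ∀ θ : ℝ, 0 < θ → θ < δ →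
      |(cos θ / (cos θ - 1) + 1 / sin θ) ^ 2 /
          (cos θ / (cos θ - 1) * (1 / sin θ)) -
        (-1 / sin (θ / 2) + 2 + 3 / 2 * sin (θ / 2) -
          27 / 8 * sin (θ / 2) ^ 3)| ≤
      C * sin (θ / 2) ^ 5 := by
  refine ⟨40, by norm_num, 1/2, by norm_num, fun θ hθ hδ => ?_⟩
  obtain ⟨s, hs⟩ : ∃ s : ℝ, s = sin (θ / 2) := ⟨_, rfl⟩
  obtain ⟨c, hc⟩ : ∃ c : ℝ, c = cos (θ / 2) := ⟨_, rfl⟩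
  rw [← hs]
  have hθ2 : 0 < θ / 2 := by linarith
  have hθ2' : θ / 2 < 1 / 4 := by linarith
  have hs_pos : 0 < s := hs ▸ sin_pos_of_pos_of_lt_pi hθ2 (by nlinarith [pi_gt_three])
  have hs_lt : s ≤ 1 / 4 := hs ▸ le_trans (Real.sin_le hθ2.le) (by linarith)
  have hc_pos : 0 < c := hc ▸ cos_pos_of_mem_Ioo
    ⟨by nlinarith [pi_gt_three], by nlinarith [pi_gt_three]⟩
  have hpyth : c ^ 2 = 1 - s ^ 2 := by
    have := sin_sq_add_cos_sq (θ / 2); rw [← hs, ← hc] at this; linarith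
  have hcos : cos θ = 1 - 2 * s ^ 2 := by
    have h : cos (θ / 2) ^ 2 = 1 / 2 + cos (2 * (θ / 2)) / 2 := Real.cos_sq (θ / 2)
    rw [show 2 * (θ / 2) = θ by ring, ← hc] at h
    linarith
  have hsin : sin θ = 2 * s * c := by
    rw [show θ = 2 * (θ / 2) by ring, sin_two_mul, ← hs, ← hc]
  have h1 : (0:ℝ) < 1 - 2 * s ^ 2 := by nlinarith
  have hden : 0 < s * c * (1 - 2 * s ^ 2) := by positivity
  -- rewrite the main expression
  have hval : (cos θ / (cos θ - 1) + 1 / sin θ) ^ 2 /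
      (cos θ / (cos θ - 1) * (1 / sin θ)) =
      2 - (1 - 2 * s ^ 2) * c / s - s / ((1 - 2 * s ^ 2) * c) := by
    rw [hcos, hsin]
    have h2 : (1 : ℝ) - 2 * s ^ 2 - 1 ≠ 0 := by nlinarith
    field_simp
    ring
  obtain ⟨P, hP⟩ : ∃ P : ℝ, P = 1 - 7/2 * s ^ 2 + 51/8 * s ^ 4 - 27/4 * s ^ 6 := ⟨_, rfl⟩
  obtain ⟨Q, hQ⟩ : ∃ Q : ℝ, Q = 1 - 4 * s ^ 2 + 8 * s ^ 4 - 4 * s ^ 6 := ⟨_, rfl⟩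
  have key : (2 - (1 - 2 * s ^ 2) * c / s - s / ((1 - 2 * s ^ 2) * c) -
      (-1 / s + 2 + 3 / 2 * s - 27 / 8 * s ^ 3)) * (s * c * (1 - 2 * s ^ 2)) =
      c * P - Q := by
    rw [hP, hQ]
    field_simp
    linear_combination (-64 * (1 - 2 * s ^ 2) ^ 2) * hpyth
  -- bound |c*P - Q|
  have hR : (c * P - Q) * (c * P + Q) =
      -89/8 * s ^ 6 + 3201/64 * s ^ 8 - 7037/64 * s ^ 10 + 925/8 * s ^ 12 - 729/16 * s ^ 14 := by
    rw [hP, hQ]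
    linear_combination ((1 - 7/2 * s ^ 2 + 51/8 * s ^ 4 - 27/4 * s ^ 6)^2) * hpyth
  have hp2 : 0 < s ^ 2 := pow_pos hs_pos 2
  have hs2 : s ^ 2 ≤ 1 / 16 := by nlinarith
  have hstep : ∀ n : ℕ, s ^ 2 * s ^ n ≤ 1 / 16 * s ^ n := fun n =>
    mul_le_mul_of_nonneg_right hs2 (pow_nonneg hs_pos.le n)
  have h4 : s ^ 4 ≤ 1 / 16 * s ^ 2 := by
    have := hstep 2; rw [show s ^ 2 * s ^ 2 = s ^ 4 by ring] at this; linarith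
  have h6 : s ^ 6 ≤ 1 / 16 * s ^ 4 := by
    have := hstep 4; rw [show s ^ 2 * s ^ 4 = s ^ 6 by ring] at this; linarith
  have h8 : s ^ 8 ≤ 1 / 16 * s ^ 6 := by
    have := hstep 6; rw [show s ^ 2 * s ^ 6 = s ^ 8 by ring] at this; linarith
  have h10 : s ^ 10 ≤ 1 / 16 * s ^ 8 := by
    have := hstep 8; rw [show s ^ 2 * s ^ 8 = s ^ 10 by ring] at this; linarith
  have h12 : s ^ 12 ≤ 1 / 16 * s ^ 10 := by
    have := hstep 10; rw [show s ^ 2 * s ^ 10 = s ^ 12 by ring] at this; linarith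
  have h14 : s ^ 14 ≤ 1 / 16 * s ^ 12 := by
    have := hstep 12; rw [show s ^ 2 * s ^ 12 = s ^ 14 by ring] at this; linarith
  have hp4 : 0 < s ^ 4 := pow_pos hs_pos 4
  have hp6 : 0 < s ^ 6 := pow_pos hs_pos 6
  have hp8 : 0 < s ^ 8 := pow_pos hs_pos 8
  have hp10 : 0 < s ^ 10 := pow_pos hs_pos 10
  have hp12 : 0 < s ^ 12 := pow_pos hs_pos 12
  have hp14 : 0 < s ^ 14 := pow_pos hs_pos 14
  have hPpos : 0 < P := by rw [hP]; linarith
  have hQpos : (3:ℝ)/4 ≤ Q := by rw [hQ]; linarith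
  have hsum : (3:ℝ)/4 ≤ c * P + Q := by
    have : 0 ≤ c * P := mul_nonneg hc_pos.le hPpos.le
    linarith
  have hRbound : |(c * P - Q) * (c * P + Q)| ≤ 16 * s ^ 6 := by
    rw [hR, abs_le]
    constructor <;> linarith
  have hcPQ : |c * P - Q| ≤ 64/3 * s ^ 6 := by
    have h3 : |c * P - Q| * (c * P + Q) ≤ 16 * s ^ 6 := by
      calc |c * P - Q| * (c * P + Q) = |(c * P - Q) * (c * P + Q)| := by
            rw [abs_mul, abs_of_pos (by linarith : (0:ℝ) < c * P + Q)]
        _ ≤ 16 * s ^ 6 := hRbound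
    have h5 : |c * P - Q| * (3 / 4) ≤ 16 * s ^ 6 :=
      le_trans (mul_le_mul_of_nonneg_left hsum (abs_nonneg _)) h3
    linarith
  -- denominator lower bound
  have hc34 : (3:ℝ)/4 ≤ c := by nlinarith [hs2]
  rw [hval]
  obtain ⟨X, hX⟩ : ∃ X : ℝ, X = |2 - (1 - 2 * s ^ 2) * c / s - s / ((1 - 2 * s ^ 2) * c) -
      (-1 / s + 2 + 3 / 2 * s - 27 / 8 * s ^ 3)| := ⟨_, rfl⟩
  rw [← hX]
  have habs : X * (s * c * (1 - 2 * s ^ 2)) = |c * P - Q| := by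
    rw [hX, ← abs_of_pos hden, ← abs_mul, key]
  have hden_lb : (21:ℝ)/32 * s ≤ s * c * (1 - 2 * s ^ 2) := by
    nlinarith [hs2, hc34, hs_pos, mul_pos hs_pos hc_pos]
  have hXnn : 0 ≤ X := hX ▸ abs_nonneg _
  have hmain : X * ((21:ℝ)/32 * s) ≤ 64/3 * s ^ 6 := by
    calc X * ((21:ℝ)/32 * s) ≤ X * (s * c * (1 - 2 * s ^ 2)) :=
          mul_le_mul_of_nonneg_left hden_lb hXnn
      _ = |c * P - Q| := habs
      _ ≤ 64/3 * s ^ 6 := hcPQ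
  have h7 : X * s ≤ 40 * s ^ 5 * s := by nlinarith [hmain, hp6]
  exact le_of_mul_le_mul_right h7 hs_pos
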